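/- If ρ ∈ H is nonzero and Lρ = λρ for some complex number λ with |λ| = 1, then Aρ = λρ and Bρ = λρ. -/

import Mathlib

/-- Let `H` be a nonzero finite-dimensional complex inner product space,
`A, B` operators with `‖A‖ ≤ 1`, `‖B‖ ≤ 1`, `1` an eigenvalue of both, and a nonzero `ρ₁`
with `A* ρ₁ = ρ₁`, `B* ρ₁ = ρ₁`.  Let `L = qA + pB` with `0 < p < 1`, `q = 1 - p`.
If `ρ ≠ 0` and `L ρ = λ ρ` with `|λ| = 1`, then `A ρ = λ ρ` and `B ρ = λ ρ`. -/
theorem stmt0 {H : Type*} [NormedAddCommGroup H] [InnerProductSpace ℂ H]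
    [FiniteDimensional ℂ H] [Nontrivial H]
    (A B : H →L[ℂ] H) (hA : ‖A‖ ≤ 1) (hB : ‖B‖ ≤ 1)
    (hAeig : ∃ v : H, v ≠ 0 ∧ A v = v) (hBeig : ∃ v : H, v ≠ 0 ∧ B v = v)
    (ρ₁ : H) (hρ₁ : ρ₁ ≠ 0)
    (hAadj : ContinuousLinearMap.adjoint A ρ₁ = ρ₁)
    (hBadj : ContinuousLinearMap.adjoint B ρ₁ = ρ₁)
    (p q : ℝ) (hp : 0 < p) (hp1 : p < 1) (hq : q = 1 - p)
    (L : H →L[ℂ] H) (hL : L = (q : ℂ) • A + (p : ℂ) • B)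
    (ρ : H) (hρ : ρ ≠ 0) (lam : ℂ) (hlam : ‖lam‖ = 1)
    (hLρ : L ρ = lam • ρ) :
    A ρ = lam • ρ ∧ B ρ = lam • ρ := by
  have hq0 : (0:ℝ) < q := by linarith
  set a := A ρ with ha
  set b := B ρ with hb
  have hna : ‖a‖ ≤ ‖ρ‖ := (A.le_opNorm ρ).trans (by nlinarith [norm_nonneg ρ])
  have hnb : ‖b‖ ≤ ‖ρ‖ := (B.le_opNorm ρ).trans (by nlinarith [norm_nonneg ρ])
  have key : (q:ℂ) • a + (p:ℂ) • b = lam • ρ := by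
    rw [hL] at hLρ
    simpa using hLρ
  have hr : ‖lam • ρ‖ = ‖ρ‖ := by
    rw [norm_smul, hlam, one_mul]
  set t : ℝ := (inner ℂ a b : ℂ).re with ht
  have hsq : ‖ρ‖ ^ 2 = q ^ 2 * ‖a‖ ^ 2 + 2 * (q * p) * t + p ^ 2 * ‖b‖ ^ 2 := by
    have h1 : ‖ρ‖ ^ 2 = ‖(q:ℂ) • a + (p:ℂ) • b‖ ^ 2 := by rw [key, hr]
    rw [h1, @norm_add_sq ℂ, inner_smul_left, inner_smul_right]
    simp only [Complex.conj_ofReal, norm_smul, Complex.norm_real, Real.norm_eq_abs,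
      abs_of_pos hp, abs_of_pos hq0, Complex.re_ofReal_mul, RCLike.re_to_complex, ht]
    ring
  have hdiff : ‖a - b‖ ^ 2 = ‖a‖ ^ 2 - 2 * t + ‖b‖ ^ 2 := by
    rw [@norm_sub_sq ℂ]
    simp [ht]
  have hab : a = b := by
    have hna2 : ‖a‖ ^ 2 ≤ ‖ρ‖ ^ 2 := pow_le_pow_left₀ (norm_nonneg a) hna 2
    have hnb2 : ‖b‖ ^ 2 ≤ ‖ρ‖ ^ 2 := pow_le_pow_left₀ (norm_nonneg b) hnb 2
    have e1 : q * ‖a‖ ^ 2 ≤ q * ‖ρ‖ ^ 2 := mul_le_mul_of_nonneg_left hna2 hq0.le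
    have e2 : p * ‖b‖ ^ 2 ≤ p * ‖ρ‖ ^ 2 := mul_le_mul_of_nonneg_left hnb2 hp.le
    have hz0 : p * q * ‖a - b‖ ^ 2 ≤ 0 := by
      rw [hdiff, hq]; rw [hq] at hsq e1
      nlinarith [hsq, e1, e2]
    have hz : ‖a - b‖ ^ 2 ≤ 0 := by
      by_contra h
      push_neg at h
      exact absurd hz0 (not_le.mpr (mul_pos (mul_pos hp hq0) h))
    have : ‖a - b‖ = 0 := le_antisymm (by nlinarith [norm_nonneg (a - b)]) (norm_nonneg _)
    exact sub_eq_zero.mp (norm_eq_zero.mp this)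
  have hbl : b = lam • ρ := by
    have h2 : ((q:ℂ) + (p:ℂ)) • b = lam • ρ := by rw [← hab] at key; rw [add_smul, ← hab]; exact key
    have h3 : (q:ℂ) + (p:ℂ) = 1 := by
      rw [← Complex.ofReal_add, hq]; norm_num
    rwa [h3, one_smul] at h2
  exact ⟨hab.trans hbl, hbl⟩
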